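/- Let d ≥ 2 be an integer. There exist constants C₁, C₂ > 0, depending only on d, with the following property. Let r, α > 0, let k ≥ 1 be an integer, and suppose θ ∈ (0, π/2] satisfies the volume-matching equation ∫₀^θ (sin u)^{d−2} du = (ω_{d−1}/ω_{d−2}) · ( ∫₀^r (sinh(αρ))^{d−1} dρ ) / ( ∫_{(k−1)r}^{kr} (sinh(αρ))^{d−1} dρ ). Then C₁ · sinh(αr/2)/sinh(kαr) ≤ θ ≤ C₂ · sinh(αr)/sinh((k−1)αr), where for k = 1 the upper bound is interpreted as vacuous (sinh(0) = 0). -/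

import Mathlib

noncomputable def sphereVol (m : ℕ) : ℝ :=
  2 * Real.pi ^ ((m + 1 : ℝ) / 2) / Real.Gamma ((m + 1 : ℝ) / 2)

lemma sphereVol_pos (m : ℕ) : 0 < sphereVol m := by
  have h : (0:ℝ) < (m+1:ℝ)/2 := by positivity
  have hg := Real.Gamma_pos_of_pos h
  unfold sphereVol
  positivity

lemma setInt_lb {f : ℝ → ℝ} (hf : Continuous f) {a b c : ℝ} (hab : a ≤ b)
    (h : ∀ x ∈ Set.Icc a b, c ≤ f x) :
    c * (b - a) ≤ ∫ x in Set.Icc a b, f x := by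
  have h1 : ∫ _x in Set.Icc a b, (c : ℝ) = c * (b - a) := by
    simp [Real.volume_Icc, ENNReal.toReal_ofReal (by linarith : (0:ℝ) ≤ b - a), mul_comm, hab]
  calc c * (b - a) = ∫ _x in Set.Icc a b, c := h1.symm
    _ ≤ ∫ x in Set.Icc a b, f x :=
      MeasureTheory.setIntegral_mono_on (by simp) (hf.integrableOn_Icc) measurableSet_Icc h

lemma setInt_ub {f : ℝ → ℝ} (hf : Continuous f) {a b c : ℝ} (hab : a ≤ b)
    (h : ∀ x ∈ Set.Icc a b, f x ≤ c) :
    (∫ x in Set.Icc a b, f x) ≤ c * (b - a) := by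
  have h1 : ∫ _x in Set.Icc a b, (c : ℝ) = c * (b - a) := by
    simp [Real.volume_Icc, ENNReal.toReal_ofReal (by linarith : (0:ℝ) ≤ b - a), mul_comm, hab]
  calc (∫ x in Set.Icc a b, f x) ≤ ∫ _x in Set.Icc a b, c :=
      MeasureTheory.setIntegral_mono_on (hf.integrableOn_Icc) (by simp) measurableSet_Icc h
    _ = c * (b - a) := h1

lemma icc_pow_integral {θ : ℝ} (hθ : 0 ≤ θ) (n : ℕ) :
    ∫ u in Set.Icc (0:ℝ) θ, u ^ n = θ ^ (n+1) / (n + 1) := by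
  rw [MeasureTheory.integral_Icc_eq_integral_Ioc, ← intervalIntegral.integral_of_le hθ,
    integral_pow]
  simp

lemma rpow_inv_natpow {c : ℝ} (hc : 0 < c) {m : ℕ} (hm : m ≠ 0) :
    (c ^ ((m:ℝ)⁻¹)) ^ m = c := by
  rw [← Real.rpow_natCast (c ^ ((m:ℝ)⁻¹)) m, ← Real.rpow_mul hc.le,
    inv_mul_cancel₀ (by exact_mod_cast hm), Real.rpow_one]

set_option maxHeartbeats 1000000 in
theorem stmt_14 (d : ℕ) (hd : 2 ≤ d) :
    ∃ C₁ > (0 : ℝ), ∃ C₂ > (0 : ℝ), ∀ r α : ℝ, 0 < r → 0 < α →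
      ∀ k : ℕ, 1 ≤ k → ∀ θ : ℝ, θ ∈ Set.Ioc 0 (Real.pi / 2) →
      (∫ u in Set.Icc (0 : ℝ) θ, Real.sin u ^ (d - 2)) =
        (sphereVol (d - 1) / sphereVol (d - 2)) *
          ((∫ ρ in Set.Icc (0 : ℝ) r, Real.sinh (α * ρ) ^ (d - 1)) /
            (∫ ρ in Set.Icc ((k - 1 : ℝ) * r) (k * r),
              Real.sinh (α * ρ) ^ (d - 1))) →
      C₁ * (Real.sinh (α * r / 2) / Real.sinh (k * α * r)) ≤ θ ∧
        (2 ≤ k →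
          θ ≤ C₂ * (Real.sinh (α * r) / Real.sinh ((k - 1 : ℝ) * α * r))) := by
  obtain ⟨n, rfl⟩ : ∃ n, d = n + 2 := ⟨d - 2, by omega⟩
  have e1 : n + 2 - 2 = n := by omega
  have e2 : n + 2 - 1 = n + 1 := by omega
  simp only [e1, e2]
  have hπ := Real.pi_pos
  set cd := sphereVol (n+1) / sphereVol n with hcddef
  have hcd : 0 < cd := div_pos (sphereVol_pos _) (sphereVol_pos _)
  have hM : (0:ℝ) < (n:ℝ) + 1 := by positivity
  have hC1pos : (0:ℝ) < ((n:ℝ)+1) * cd / 2 := div_pos (mul_pos hM hcd) two_pos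
  have hC2pos : (0:ℝ) < ((n:ℝ)+1) * cd * (Real.pi/2)^n :=
    mul_pos (mul_pos hM hcd) (pow_pos (by positivity) n)
  refine ⟨(((n:ℝ)+1) * cd / 2) ^ (((n+1 : ℕ):ℝ))⁻¹,
    Real.rpow_pos_of_pos hC1pos _,
    (((n:ℝ)+1) * cd * (Real.pi/2)^n) ^ (((n+1 : ℕ):ℝ))⁻¹,
    Real.rpow_pos_of_pos hC2pos _, ?_⟩
  intro r α hr hα k hk θ hθ heq
  obtain ⟨hθ0, hθπ⟩ := hθ
  have hk1 : (1:ℝ) ≤ (k:ℝ) := by exact_mod_cast hk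
  have hfc : Continuous fun ρ : ℝ => Real.sinh (α * ρ) ^ (n+1) := by fun_prop
  have hsc : Continuous fun u : ℝ => Real.sin u ^ n := by fun_prop
  set F := ∫ u in Set.Icc (0 : ℝ) θ, Real.sin u ^ n with hF
  set N := ∫ ρ in Set.Icc (0 : ℝ) r, Real.sinh (α * ρ) ^ (n+1) with hN
  set D := ∫ ρ in Set.Icc (((k:ℝ) - 1) * r) ((k:ℝ) * r), Real.sinh (α * ρ) ^ (n+1) with hD
  have hnn : ∀ x : ℝ, 0 ≤ x → 0 ≤ Real.sinh (α * x) ^ (n+1) := fun x hx =>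
    pow_nonneg (Real.sinh_nonneg_iff.mpr (mul_nonneg hα.le hx)) _
  have hS2 : 0 ≤ Real.sinh (α * r / 2) :=
    Real.sinh_nonneg_iff.mpr (div_nonneg (mul_nonneg hα.le hr.le) two_pos.le)
  -- monotonicity in the left endpoint
  have hmono : ∀ {a b a' : ℝ}, 0 ≤ a → a ≤ a' →
      (∫ ρ in Set.Icc a' b, Real.sinh (α * ρ) ^ (n+1)) ≤
      ∫ ρ in Set.Icc a b, Real.sinh (α * ρ) ^ (n+1) := by
    intro a b a' ha haa'
    refine MeasureTheory.setIntegral_mono_set hfc.integrableOn_Icc ?_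
      ((Set.Icc_subset_Icc haa' le_rfl).eventuallyLE)
    exact (MeasureTheory.ae_restrict_iff' measurableSet_Icc).mpr
      (Filter.Eventually.of_forall fun x hx => hnn x (le_trans ha hx.1))
  -- N lower bound
  have hN1' : Real.sinh (α * r / 2) ^ (n+1) * (r/2) ≤ N := by
    have h1 : Real.sinh (α * r / 2) ^ (n+1) * (r - r/2) ≤
        ∫ ρ in Set.Icc (r/2) r, Real.sinh (α * ρ) ^ (n+1) := by
      refine setInt_lb hfc (by linarith) fun x hx => ?_
      have h2 : α * (r/2) ≤ α * x := mul_le_mul_of_nonneg_left hx.1 hα.le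
      exact pow_le_pow_left₀ hS2 (Real.sinh_le_sinh.mpr (by linarith)) _
    rw [show r - r/2 = r/2 by ring] at h1
    exact le_trans h1 (hmono le_rfl (by linarith))
  -- N upper bound
  have hN2 : N ≤ Real.sinh (α * r) ^ (n+1) * r := by
    have h1 := setInt_ub hfc hr.le (c := Real.sinh (α * r) ^ (n+1)) fun x hx =>
      pow_le_pow_left₀ (Real.sinh_nonneg_iff.mpr (mul_nonneg hα.le hx.1))
        (Real.sinh_le_sinh.mpr (mul_le_mul_of_nonneg_left hx.2 hα.le)) _
    rw [sub_zero] at h1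
    exact h1
  have hk0 : (0:ℝ) ≤ (k:ℝ) - 1 := by linarith
  have hab : ((k:ℝ) - 1) * r ≤ (k:ℝ) * r :=
    mul_le_mul_of_nonneg_right (by linarith) hr.le
  have hlen : (k:ℝ) * r - ((k:ℝ) - 1) * r = r := by ring
  -- D upper bound
  have hD1 : D ≤ Real.sinh ((k:ℝ) * α * r) ^ (n+1) * r := by
    have h1 := setInt_ub hfc hab (c := Real.sinh ((k:ℝ) * α * r) ^ (n+1)) fun x hx => by
      have hx0 : 0 ≤ x := le_trans (mul_nonneg hk0 hr.le) hx.1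
      have h2 : α * x ≤ α * ((k:ℝ) * r) := mul_le_mul_of_nonneg_left hx.2 hα.le
      have h3 : α * ((k:ℝ) * r) = (k:ℝ) * α * r := by ring
      exact pow_le_pow_left₀ (Real.sinh_nonneg_iff.mpr (mul_nonneg hα.le hx0))
        (Real.sinh_le_sinh.mpr (by linarith)) _
    rw [hlen] at h1
    exact h1
  -- D lower bound
  have hD2 : Real.sinh (((k:ℝ) - 1) * α * r) ^ (n+1) * r ≤ D := by
    have h1 := setInt_lb hfc hab (c := Real.sinh (((k:ℝ) - 1) * α * r) ^ (n+1)) fun x hx => by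
      have h2 : α * (((k:ℝ) - 1) * r) ≤ α * x := mul_le_mul_of_nonneg_left hx.1 hα.le
      have h3 : α * (((k:ℝ) - 1) * r) = ((k:ℝ) - 1) * α * r := by ring
      exact pow_le_pow_left₀
        (Real.sinh_nonneg_iff.mpr (mul_nonneg (mul_nonneg hk0 hα.le) hr.le))
        (Real.sinh_le_sinh.mpr (by linarith)) _
    rw [hlen] at h1
    exact h1
  -- D positive
  have hDpos : 0 < D := by
    have hkr : (0:ℝ) < ((k:ℝ) - 1/2) * r := by nlinarith
    have hmid : ((k:ℝ) - 1) * r ≤ ((k:ℝ) - 1/2) * r :=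
      mul_le_mul_of_nonneg_right (by linarith) hr.le
    have hspos : 0 < Real.sinh (α * (((k:ℝ) - 1/2) * r)) :=
      Real.sinh_pos_iff.mpr (mul_pos hα hkr)
    have h1 : Real.sinh (α * (((k:ℝ) - 1/2) * r)) ^ (n+1) * ((k:ℝ) * r - ((k:ℝ) - 1/2) * r) ≤
        ∫ ρ in Set.Icc (((k:ℝ) - 1/2) * r) ((k:ℝ) * r), Real.sinh (α * ρ) ^ (n+1) := by
      refine setInt_lb hfc (by nlinarith) fun x hx => ?_
      have h2 : α * (((k:ℝ) - 1/2) * r) ≤ α * x := mul_le_mul_of_nonneg_left hx.1 hα.le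
      exact pow_le_pow_left₀ hspos.le (Real.sinh_le_sinh.mpr h2) _
    have h2 : (∫ ρ in Set.Icc (((k:ℝ) - 1/2) * r) ((k:ℝ) * r), Real.sinh (α * ρ) ^ (n+1)) ≤ D :=
      hmono (mul_nonneg hk0 hr.le) hmid
    have hl : (0:ℝ) < (k:ℝ) * r - ((k:ℝ) - 1/2) * r := by nlinarith
    exact lt_of_lt_of_le (mul_pos (pow_pos hspos _) hl) (le_trans h1 h2)
  have hNpos : (0:ℝ) ≤ N :=
    le_trans (mul_nonneg (pow_nonneg hS2 _) (by linarith)) hN1'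
  -- F bounds
  have hFub : F ≤ θ ^ (n+1) / ((n:ℝ)+1) := by
    have h1 : F ≤ ∫ u in Set.Icc (0:ℝ) θ, u ^ n := by
      refine MeasureTheory.setIntegral_mono_on hsc.integrableOn_Icc
        ((continuous_pow n).integrableOn_Icc) measurableSet_Icc fun x hx => ?_
      exact pow_le_pow_left₀
        (Real.sin_nonneg_of_nonneg_of_le_pi hx.1 (by linarith [hx.2]))
        (Real.sin_le hx.1) _
    rw [icc_pow_integral hθ0.le n] at h1
    exact_mod_cast h1
  have hFlb : (2/Real.pi)^n * (θ ^ (n+1) / ((n:ℝ)+1)) ≤ F := by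
    have h1 : (∫ u in Set.Icc (0:ℝ) θ, (2/Real.pi)^n * u ^ n) ≤ F := by
      refine MeasureTheory.setIntegral_mono_on
        ((continuous_const.mul (continuous_pow n)).integrableOn_Icc)
        hsc.integrableOn_Icc measurableSet_Icc fun x hx => ?_
      rw [← mul_pow]
      exact pow_le_pow_left₀ (mul_nonneg (by positivity) hx.1)
        (Real.mul_le_sin hx.1 (le_trans hx.2 hθπ)) _
    rw [MeasureTheory.integral_const_mul, icc_pow_integral hθ0.le n] at h1
    exact_mod_cast h1
  have hSk : 0 < Real.sinh ((k:ℝ) * α * r) :=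
    Real.sinh_pos_iff.mpr (mul_pos (mul_pos (lt_of_lt_of_le one_pos hk1) hα) hr)
  constructor
  · -- lower bound
    set X := Real.sinh (α * r / 2) / Real.sinh ((k:ℝ) * α * r) with hX
    have hX0 : 0 ≤ X := div_nonneg hS2 hSk.le
    have key : cd * ((Real.sinh (α * r / 2) ^ (n+1) * (r/2)) /
        (Real.sinh ((k:ℝ) * α * r) ^ (n+1) * r)) ≤ F := by
      rw [heq]
      exact mul_le_mul_of_nonneg_left (div_le_div₀ hNpos hN1' hDpos hD1) hcd.le
    have hquot : (Real.sinh (α * r / 2) ^ (n+1) * (r/2)) /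
        (Real.sinh ((k:ℝ) * α * r) ^ (n+1) * r) = X ^ (n+1) / 2 := by
      rw [hX, div_pow]
      field_simp
    rw [hquot] at key
    have hstep : (((n:ℝ)+1) * cd / 2) * X ^ (n+1) ≤ θ ^ (n+1) := by
      have h2 := mul_le_mul_of_nonneg_left (le_trans key hFub) hM.le
      have hL : ((n:ℝ)+1) * (cd * (X ^ (n+1) / 2)) = (((n:ℝ)+1) * cd / 2) * X ^ (n+1) := by
        ring
      have hR : ((n:ℝ)+1) * (θ ^ (n+1) / ((n:ℝ)+1)) = θ ^ (n+1) := by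
        field_simp
      rw [hL, hR] at h2
      exact h2
    have hC : ((((n:ℝ)+1) * cd / 2) ^ (((n+1 : ℕ):ℝ))⁻¹) ^ (n+1) = ((n:ℝ)+1) * cd / 2 :=
      rpow_inv_natpow hC1pos (Nat.succ_ne_zero n)
    have hfin : ((((n:ℝ)+1) * cd / 2) ^ (((n+1 : ℕ):ℝ))⁻¹ * X) ^ (n+1) ≤ θ ^ (n+1) := by
      rw [mul_pow, hC]
      exact hstep
    exact (pow_le_pow_iff_left₀
      (mul_nonneg (Real.rpow_pos_of_pos hC1pos _).le hX0) hθ0.le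
      (Nat.succ_ne_zero n)).mp hfin
  · -- upper bound
    intro hk2
    have hk2' : (2:ℝ) ≤ (k:ℝ) := by exact_mod_cast hk2
    have hSk1 : 0 < Real.sinh (((k:ℝ) - 1) * α * r) :=
      Real.sinh_pos_iff.mpr (mul_pos (mul_pos (by linarith) hα) hr)
    have hSr : 0 ≤ Real.sinh (α * r) :=
      Real.sinh_nonneg_iff.mpr (mul_nonneg hα.le hr.le)
    set Y := Real.sinh (α * r) / Real.sinh (((k:ℝ) - 1) * α * r) with hY
    have hY0 : 0 ≤ Y := div_nonneg hSr hSk1.le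
    have key : F ≤ cd * ((Real.sinh (α * r) ^ (n+1) * r) /
        (Real.sinh (((k:ℝ) - 1) * α * r) ^ (n+1) * r)) := by
      rw [heq]
      exact mul_le_mul_of_nonneg_left
        (div_le_div₀ (mul_nonneg (pow_nonneg hSr _) hr.le) hN2
          (mul_pos (pow_pos hSk1 _) hr) hD2) hcd.le
    have hquot : (Real.sinh (α * r) ^ (n+1) * r) /
        (Real.sinh (((k:ℝ) - 1) * α * r) ^ (n+1) * r) = Y ^ (n+1) := by
      rw [hY, div_pow]
      field_simp
    rw [hquot] at key
    have hstep : θ ^ (n+1) ≤ (((n:ℝ)+1) * cd * (Real.pi/2)^n) * Y ^ (n+1) := by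
      have h2 := mul_le_mul_of_nonneg_left (le_trans hFlb key)
        (by positivity : (0:ℝ) ≤ ((n:ℝ)+1) * (Real.pi/2)^n)
      have hL : ((n:ℝ)+1) * (Real.pi/2)^n * ((2/Real.pi)^n * (θ ^ (n+1) / ((n:ℝ)+1))) =
          θ ^ (n+1) := by
        have hp1 : (Real.pi/2)^n * (2/Real.pi)^n = 1 := by
          rw [← mul_pow, show Real.pi/2 * (2/Real.pi) = 1 by field_simp, one_pow]
        have hp2 : ((n:ℝ)+1) * (θ ^ (n+1) / ((n:ℝ)+1)) = θ ^ (n+1) := by field_simp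
        calc ((n:ℝ)+1) * (Real.pi/2)^n * ((2/Real.pi)^n * (θ ^ (n+1) / ((n:ℝ)+1)))
            = ((Real.pi/2)^n * (2/Real.pi)^n) *
              (((n:ℝ)+1) * (θ ^ (n+1) / ((n:ℝ)+1))) := by ring
          _ = θ ^ (n+1) := by rw [hp1, hp2, one_mul]
      have hR : ((n:ℝ)+1) * (Real.pi/2)^n * (cd * Y ^ (n+1)) =
          (((n:ℝ)+1) * cd * (Real.pi/2)^n) * Y ^ (n+1) := by ring
      rw [hL, hR] at h2
      exact h2
    have hC : ((((n:ℝ)+1) * cd * (Real.pi/2)^n) ^ (((n+1 : ℕ):ℝ))⁻¹) ^ (n+1) =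
        ((n:ℝ)+1) * cd * (Real.pi/2)^n :=
      rpow_inv_natpow hC2pos (Nat.succ_ne_zero n)
    have hfin : θ ^ (n+1) ≤
        ((((n:ℝ)+1) * cd * (Real.pi/2)^n) ^ (((n+1 : ℕ):ℝ))⁻¹ * Y) ^ (n+1) := by
      rw [mul_pow, hC]
      exact hstep
    exact (pow_le_pow_iff_left₀ hθ0.le
      (mul_nonneg (Real.rpow_pos_of_pos hC2pos _).le hY0)
      (Nat.succ_ne_zero n)).mp hfin
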